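/- arXiv:2505.01276 — 6 statements merged into one kernel-verified Lean document; each statement's English description precedes it below -/
import Mathlib

section
/- Let k be a field, let V1, V2, V3 be vector spaces over k, let D be a linear subspace of V1 × V2, and let m : D → V3 be a surjective linear map. Let E := {(α,β) ∈ V1* × V2* : there exists γ ∈ V3* with γ(m(u,v)) = α(u) + β(v) for all (u,v) ∈ D}, and for (α,β) ∈ E let n(α,β) denote the unique such γ. Define Φ : (V3 × V3*) × (V1 × V1*) × (V2 × V2*) → (V3 × V1 × V2) × (V3* × V1* × V2*) by Φ((w,γ),(u,α),(v,β)) := ((w,u,v),(γ,−α,−β)). Then the image under Φ of the set {((m(u,v), n(α,β)), (u,α), (v,β)) : (u,v) ∈ D, (α,β) ∈ E} equals gr(m) × ann(gr(m)), where gr(m) := {(m(u,v), u, v) : (u,v) ∈ D} and ann(gr(m)) ⊆ V3* × V1* × V2* is its annihilator. -/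
open Module

/-- The graph of the surjective linear map `m : D → V3`, viewed inside `V3 × V1 × V2`. -/
def grm {k : Type*} [Field k]
    {V1 V2 V3 : Type*} [AddCommGroup V1] [Module k V1]
    [AddCommGroup V2] [Module k V2] [AddCommGroup V3] [Module k V3]
    (D : Submodule k (V1 × V2)) (m : D →ₗ[k] V3) : Set (V3 × V1 × V2) :=
  {p | ∃ d : D, p = (m d, (d : V1 × V2).1, (d : V1 × V2).2)}

/-- The annihilator of `gr(m)` inside `V3* × V1* × V2*`. -/
def annGrm {k : Type*} [Field k]
    {V1 V2 V3 : Type*} [AddCommGroup V1] [Module k V1]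
    [AddCommGroup V2] [Module k V2] [AddCommGroup V3] [Module k V3]
    (D : Submodule k (V1 × V2)) (m : D →ₗ[k] V3) :
    Set (Dual k V3 × Dual k V1 × Dual k V2) :=
  {q | ∀ p ∈ grm D m, q.1 p.1 + q.2.1 p.2.1 + q.2.2 p.2.2 = 0}

/-- The set `E` of pairs `(α, β)` admitting a (necessarily unique) `γ` with
`γ(m(u,v)) = α(u) + β(v)` on `D`. -/
def Eset {k : Type*} [Field k]
    {V1 V2 V3 : Type*} [AddCommGroup V1] [Module k V1]
    [AddCommGroup V2] [Module k V2] [AddCommGroup V3] [Module k V3]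
    (D : Submodule k (V1 × V2)) (m : D →ₗ[k] V3) : Set (Dual k V1 × Dual k V2) :=
  {p | ∃ γ : Dual k V3, ∀ d : D, γ (m d) = p.1 (d : V1 × V2).1 + p.2 (d : V1 × V2).2}

theorem stmt1 {k : Type*} [Field k]
    {V1 V2 V3 : Type*} [AddCommGroup V1] [Module k V1]
    [AddCommGroup V2] [Module k V2] [AddCommGroup V3] [Module k V3]
    (D : Submodule k (V1 × V2)) (m : D →ₗ[k] V3) (hm : Function.Surjective m)
    -- `n` assigns to each `(α, β) ∈ E` the unique `γ` as above
    (n : Dual k V1 × Dual k V2 → Dual k V3)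
    (hn : ∀ p ∈ Eset D m, ∀ d : D,
      n p (m d) = p.1 (d : V1 × V2).1 + p.2 (d : V1 × V2).2)
    -- the isomorphism Φ
    (Φ : (V3 × Dual k V3) × (V1 × Dual k V1) × (V2 × Dual k V2) →
        (V3 × V1 × V2) × (Dual k V3 × Dual k V1 × Dual k V2))
    (hΦ : ∀ x, Φ x = ((x.1.1, x.2.1.1, x.2.2.1), (x.1.2, -x.2.1.2, -x.2.2.2))) :
    Φ '' {x | ∃ (d : D) (p : Dual k V1 × Dual k V2), p ∈ Eset D m ∧
        x = ((m d, n p), ((d : V1 × V2).1, p.1), ((d : V1 × V2).2, p.2))}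
      = grm D m ×ˢ annGrm D m := by
  ext q
  constructor
  · rintro ⟨x, ⟨d, p, hp, rfl⟩, rfl⟩
    rw [hΦ]
    constructor
    · exact ⟨d, rfl⟩
    · rintro _ ⟨d', rfl⟩
      simp only [LinearMap.neg_apply]
      have h := hn p hp d'
      linear_combination h
  · rintro ⟨⟨d, hd⟩, hann⟩
    set γ := q.2.1 with hγdef
    set α := q.2.2.1 with hαdef
    set β := q.2.2.2 with hβdef
    have hpE : (-α, -β) ∈ Eset D m := by
      refine ⟨γ, fun d' => ?_⟩
      have h := hann _ ⟨d', rfl⟩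
      simp only [LinearMap.neg_apply]
      linear_combination h
    have hγ : n (-α, -β) = γ := by
      have h1' : ∀ d' : D, n (-α, -β) (m d') = γ (m d') := by
        intro d'
        have ha := hann _ ⟨d', rfl⟩
        have hb := hn _ hpE d'
        simp only [LinearMap.neg_apply] at hb
        linear_combination hb - ha
      ext w'
      obtain ⟨d', rfl⟩ := hm w'
      exact h1' d'
    refine ⟨((m d, n (-α, -β)), ((d : V1 × V2).1, -α), ((d : V1 × V2).2, -β)),
      ⟨d, (-α, -β), hpE, rfl⟩, ?_⟩
    rw [hΦ]
    simp only [hγ, neg_neg]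
    rw [← hd]
end

section
/- Let K be a real Lie algebra and ∂ : K* → K a linear map that is symmetric and K-invariant. Then the double bracket ⁅(γ,k),(γ',k')⁆ := (k·γ' − k'·γ + (∂γ)·γ', [k,k']) on K* × K is bilinear, antisymmetric, and satisfies the Jacobi identity; hence it makes K* × K into a real Lie algebra. -/
open Module

/-- The coadjoint action of `k ∈ K` on `γ ∈ K*`: `(k·γ)(x) = -γ ⁅k, x⁆`. -/
def coad {K : Type*} [LieRing K] [LieAlgebra ℝ K] (k : K) (γ : Dual ℝ K) :
    Dual ℝ K :=
  -(γ ∘ₗ (LieAlgebra.ad ℝ K k))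

/-- The double bracket on `K* × K` induced by a symmetric `K`-invariant map `δ : K* → K`. -/
def dblBracket {K : Type*} [LieRing K] [LieAlgebra ℝ K] (δ : Dual ℝ K →ₗ[ℝ] K)
    (e f : Dual ℝ K × K) : Dual ℝ K × K :=
  (coad e.2 f.1 - coad f.2 e.1 + coad (δ e.1) f.1, ⁅e.2, f.2⁆)

section Aux
variable {K : Type*} [LieRing K] [LieAlgebra ℝ K]


lemma coad_apply (k : K) (γ : Dual ℝ K) (x : K) : coad k γ x = -γ ⁅k, x⁆ := rfl

lemma coad_sub_left (a b : K) (γ : Dual ℝ K) : coad (a - b) γ = coad a γ - coad b γ := by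
  ext x; simp [coad_apply]; ring

lemma coad_neg_left (k : K) (γ : Dual ℝ K) : coad (-k) γ = -coad k γ := by
  ext x; simp only [coad_apply, neg_lie, map_neg, LinearMap.neg_apply, neg_neg]

lemma coad_neg_right (k : K) (γ : Dual ℝ K) : coad k (-γ) = -coad k γ := by
  ext x; simp [coad_apply]

lemma coad_add_left (a b : K) (γ : Dual ℝ K) : coad (a + b) γ = coad a γ + coad b γ := by
  ext x; simp [coad_apply]; ring

lemma coad_add_right (k : K) (γ γ' : Dual ℝ K) : coad k (γ + γ') = coad k γ + coad k γ' := by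
  ext x; simp [coad_apply]; ring

lemma coad_sub_right (k : K) (γ γ' : Dual ℝ K) : coad k (γ - γ') = coad k γ - coad k γ' := by
  ext x; simp [coad_apply]; ring

lemma coad_smul_left (r : ℝ) (k : K) (γ : Dual ℝ K) : coad (r • k) γ = r • coad k γ := by
  ext x; simp [coad_apply]

lemma coad_smul_right (r : ℝ) (k : K) (γ : Dual ℝ K) : coad k (r • γ) = r • coad k γ := by
  ext x; simp [coad_apply]

lemma coad_lie (a b : K) (γ : Dual ℝ K) :
    coad ⁅a, b⁆ γ = coad a (coad b γ) - coad b (coad a γ) := by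
  ext x; simp [coad_apply, lie_lie]

section
variable (δ : Dual ℝ K →ₗ[ℝ] K)
    (hsym : ∀ γ γ' : Dual ℝ K, γ' (δ γ) = γ (δ γ'))
    (hinv : ∀ (k : K) (γ γ' : Dual ℝ K), γ ⁅k, δ γ'⁆ + γ' ⁅k, δ γ⁆ = 0)

include hinv in
lemma factA (γ γ' : Dual ℝ K) : coad (δ γ) γ' = - coad (δ γ') γ := by
  ext x
  have h := hinv x γ γ'
  simp only [coad_apply, LinearMap.neg_apply, ← lie_skew (δ γ) x, ← lie_skew (δ γ') x,
    map_neg] at *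
  linarith

include hsym hinv in
lemma equiv_lem (k : K) (γ : Dual ℝ K) : δ (coad k γ) = ⁅k, δ γ⁆ := by
  rw [← sub_eq_zero, ← Module.forall_dual_apply_eq_zero_iff ℝ]
  intro φ
  have h1 := hsym (coad k γ) φ
  have h2 := hinv k γ φ
  simp [coad_apply] at *
  linarith

include hsym hinv in
lemma key_lem (α β : Dual ℝ K) (c : K) :
    coad (δ α) (coad c β) = coad c (coad (δ α) β) + coad (δ β) (coad c α) := by
  have h1 : coad (δ α) (coad c β) - coad c (coad (δ α) β) = coad ⁅δ α, c⁆ β :=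
    (coad_lie _ _ _).symm
  have h2 : (⁅δ α, c⁆ : K) = -δ (coad c α) := by
    rw [equiv_lem δ hsym hinv, ← lie_skew]
  have h3 : coad (-δ (coad c α)) β = coad (δ β) (coad c α) := by
    rw [coad_neg_left, factA δ hinv (coad c α) β, neg_neg]
  rw [h2, h3] at h1
  linear_combination (norm := abel) h1
end

end Aux

theorem stmt3 {K : Type*} [LieRing K] [LieAlgebra ℝ K]
    (δ : Dual ℝ K →ₗ[ℝ] K)
    (hsym : ∀ γ γ' : Dual ℝ K, γ' (δ γ) = γ (δ γ'))
    (hinv : ∀ (k : K) (γ γ' : Dual ℝ K), γ ⁅k, δ γ'⁆ + γ' ⁅k, δ γ⁆ = 0) :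
    -- bilinearity
    (∀ (e f g : Dual ℝ K × K) (r : ℝ),
        dblBracket δ (e + f) g = dblBracket δ e g + dblBracket δ f g ∧
        dblBracket δ e (f + g) = dblBracket δ e f + dblBracket δ e g ∧
        dblBracket δ (r • e) g = r • dblBracket δ e g ∧
        dblBracket δ e (r • g) = r • dblBracket δ e g) ∧
    -- antisymmetry
    (∀ e f : Dual ℝ K × K, dblBracket δ e f = - dblBracket δ f e) ∧
    -- Jacobi identity
    (∀ e f g : Dual ℝ K × K,
        dblBracket δ e (dblBracket δ f g)
          = dblBracket δ (dblBracket δ e f) g + dblBracket δ f (dblBracket δ e g)) := by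
  refine ⟨?_, ?_, ?_⟩
  · rintro ⟨α, a⟩ ⟨β, b⟩ ⟨γ, c⟩ r
    refine ⟨?_, ?_, ?_, ?_⟩
    · simp only [dblBracket, Prod.mk_add_mk, Prod.fst, Prod.snd, Prod.mk.injEq, map_add,
        coad_add_left, coad_add_right, add_lie]
      exact ⟨by abel, trivial⟩
    · simp only [dblBracket, Prod.mk_add_mk, Prod.fst, Prod.snd, Prod.mk.injEq, map_add,
        coad_add_left, coad_add_right, lie_add]
      exact ⟨by abel, trivial⟩
    · simp only [dblBracket, Prod.smul_mk, Prod.fst, Prod.snd, Prod.mk.injEq, map_smul,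
        coad_smul_left, coad_smul_right, smul_lie, smul_sub, smul_add]
    · simp only [dblBracket, Prod.smul_mk, Prod.fst, Prod.snd, Prod.mk.injEq, map_smul,
        coad_smul_left, coad_smul_right, lie_smul, smul_sub, smul_add]
  · rintro ⟨α, a⟩ ⟨β, b⟩
    simp only [dblBracket, Prod.fst, Prod.snd, Prod.neg_mk, Prod.mk.injEq]
    constructor
    · rw [factA δ hinv α β]; abel
    · rw [← lie_skew]
  · rintro ⟨α, a⟩ ⟨β, b⟩ ⟨γ, c⟩
    simp only [dblBracket, Prod.fst, Prod.snd, Prod.mk_add_mk, Prod.mk.injEq]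
    constructor
    · rw [map_add, map_sub, equiv_lem δ hsym hinv, equiv_lem δ hsym hinv,
        equiv_lem δ hsym hinv]
      simp only [coad_add_left, coad_sub_left, coad_lie, coad_add_right, coad_sub_right]
      rw [key_lem δ hsym hinv α β c]
      abel
    · exact leibniz_lie a b c
end

section
/- Let K be a real Lie algebra and ∂ : K* → K a linear map that is symmetric and K-invariant. Define the double bracket ⁅(γ,k),(γ',k')⁆ := (k·γ' − k'·γ + (∂γ)·γ', [k,k']) and the pairing ⟨(γ,k),(γ',k')⟩ := (1/2)(γ(k') + γ'(k) + γ(∂γ')) on K* × K. Then the pairing is symmetric and invariant, i.e., ⟨⁅e1,e2⁆, e3⟩ + ⟨e2, ⁅e1,e3⁆⟩ = 0 for all e1, e2, e3 ∈ K* × K; moreover, if K is finite-dimensional, the pairing is nondegenerate. In particular, K* × K is then a quadratic Lie algebra. -/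
open Module

/-- The pairing on `K* × K`: `⟨(γ,k),(γ',k')⟩ = (1/2)(γ(k') + γ'(k) + γ(δγ'))`. -/
noncomputable def dblPairing {K : Type*} [LieRing K] [LieAlgebra ℝ K] (δ : Dual ℝ K →ₗ[ℝ] K)
    (e f : Dual ℝ K × K) : ℝ :=
  (1 / 2) * (e.1 f.2 + f.1 e.2 + e.1 (δ f.1))

theorem stmt4 {K : Type*} [LieRing K] [LieAlgebra ℝ K]
    (δ : Dual ℝ K →ₗ[ℝ] K)
    (hsym : ∀ γ γ' : Dual ℝ K, γ' (δ γ) = γ (δ γ'))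
    (hinv : ∀ (k : K) (γ γ' : Dual ℝ K), γ ⁅k, δ γ'⁆ + γ' ⁅k, δ γ⁆ = 0) :
    -- the pairing is symmetric
    (∀ e f : Dual ℝ K × K, dblPairing δ e f = dblPairing δ f e) ∧
    -- the pairing is invariant
    (∀ e1 e2 e3 : Dual ℝ K × K,
        dblPairing δ (dblBracket δ e1 e2) e3 + dblPairing δ e2 (dblBracket δ e1 e3) = 0) ∧
    -- if K is finite dimensional, the pairing is nondegenerate
    (FiniteDimensional ℝ K →
      ∀ e : Dual ℝ K × K, (∀ f : Dual ℝ K × K, dblPairing δ e f = 0) → e = 0) := by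
  refine ⟨?_, ?_, ?_⟩
  · intro e f
    simp only [dblPairing, hsym f.1 e.1]
    ring
  · rintro ⟨γ1, k1⟩ ⟨γ2, k2⟩ ⟨γ3, k3⟩
    simp only [dblPairing, dblBracket, coad, LinearMap.neg_apply, LinearMap.comp_apply,
      LieAlgebra.ad_apply, LinearMap.sub_apply, LinearMap.add_apply, map_add, map_sub,
      map_neg]
    have h1 := hinv k3 γ2 γ1
    have h2 := hinv k1 γ2 γ3
    have h3 := hinv k2 γ1 γ3
    have h4 := hinv (δ γ1) γ2 γ3
    have e1 : γ2 ⁅δ γ1, k3⁆ = - γ2 ⁅k3, δ γ1⁆ := by rw [← lie_skew, map_neg]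
    have e2 : γ3 ⁅δ γ1, k2⁆ = - γ3 ⁅k2, δ γ1⁆ := by rw [← lie_skew, map_neg]
    have e3 : γ1 ⁅k3, k2⁆ = - γ1 ⁅k2, k3⁆ := by rw [← lie_skew, map_neg]
    have f1 : γ2 (δ (γ3 ∘ₗ LieAlgebra.ad ℝ K k1)) = γ3 ⁅k1, δ γ2⁆ := hsym _ _
    have f2 : γ2 (δ (γ1 ∘ₗ LieAlgebra.ad ℝ K k3)) = γ1 ⁅k3, δ γ2⁆ := hsym _ _
    have f3 : γ2 (δ (γ3 ∘ₗ LieAlgebra.ad ℝ K (δ γ1))) = γ3 ⁅δ γ1, δ γ2⁆ := hsym _ _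
    rw [f1, f2, f3, e1, e2, e3]
    linarith
  · intro _ e he
    have hγ : e.1 = 0 := by
      ext k'
      have := he (0, k')
      simp [dblPairing] at this
      simpa using this
    have hk : e.2 = 0 := by
      rw [← Module.forall_dual_apply_eq_zero_iff ℝ e.2]
      intro γ'
      have := he (γ', 0)
      simp [dblPairing, hγ] at this
      simpa using this
    exact Prod.ext hγ hk
end

section
/- Let K be a real Lie algebra and ∂ : K* → K a linear map that is symmetric and K-invariant. Let gr(m) := {((γ+γ', k), (γ, k+∂γ'), (γ', k)) : γ, γ' ∈ K*, k ∈ K} ⊆ (K* × K)³. Then: (i) gr(m) is isotropic with respect to the pairing of (K*×K) × (K*×K)‾ × (K*×K)‾, i.e., for all (a1,b1,c1), (a2,b2,c2) ∈ gr(m) one has ⟨a1,a2⟩ − ⟨b1,b2⟩ − ⟨c1,c2⟩ = 0, where ⟨(γ,k),(γ',k')⟩ := (1/2)(γ(k') + γ'(k) + γ(∂γ')); and (ii) gr(m) is closed under the componentwise double bracket ⁅(γ,k),(γ',k')⁆ := (k·γ' − k'·γ + (∂γ)·γ', [k,k']). -/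
open Module

/-- The graph of the groupoid multiplication of `K* ⊕ K ⇉ K`. -/
def grMul {K : Type*} [LieRing K] [LieAlgebra ℝ K] (δ : Dual ℝ K →ₗ[ℝ] K) :
    Set ((Dual ℝ K × K) × (Dual ℝ K × K) × (Dual ℝ K × K)) :=
  {x | ∃ (γ γ' : Dual ℝ K) (k : K), x = ((γ + γ', k), (γ, k + δ γ'), (γ', k))}

theorem stmt5 {K : Type*} [LieRing K] [LieAlgebra ℝ K]
    (δ : Dual ℝ K →ₗ[ℝ] K)
    (hsym : ∀ γ γ' : Dual ℝ K, γ' (δ γ) = γ (δ γ'))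
    (hinv : ∀ (k : K) (γ γ' : Dual ℝ K), γ ⁅k, δ γ'⁆ + γ' ⁅k, δ γ⁆ = 0) :
    -- (i) gr(m) is isotropic in (K*×K) × conj(K*×K) × conj(K*×K)
    (∀ p ∈ grMul δ, ∀ q ∈ grMul δ,
        dblPairing δ p.1 q.1 - dblPairing δ p.2.1 q.2.1 - dblPairing δ p.2.2 q.2.2 = 0) ∧
    -- (ii) gr(m) is closed under the componentwise double bracket
    (∀ p ∈ grMul δ, ∀ q ∈ grMul δ,
        (dblBracket δ p.1 q.1, dblBracket δ p.2.1 q.2.1, dblBracket δ p.2.2 q.2.2)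
          ∈ grMul δ) := by
  constructor
  · rintro p ⟨γ, γ', k, rfl⟩ q ⟨α, α', l, rfl⟩
    have h1 := hsym α γ'
    simp only [dblPairing, LinearMap.add_apply, map_add]
    ring_nf
    linarith
  · rintro p ⟨γ, γ', k, rfl⟩ q ⟨α, α', l, rfl⟩
    refine ⟨(dblBracket δ (γ, k + δ γ') (α, l + δ α')).1,
            (dblBracket δ (γ', k) (α', l)).1, ⁅k, l⁆, ?_⟩
    have hB : δ (dblBracket δ (γ', k) (α', l)).1
        = ⁅k + δ γ', l + δ α'⁆ - ⁅k, l⁆ := by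
      rw [← sub_eq_zero, ← Module.forall_dual_apply_eq_zero_iff ℝ]
      intro μ
      have hμ : μ (δ (dblBracket δ (γ', k) (α', l)).1)
          = (dblBracket δ (γ', k) (α', l)).1 (δ μ) := hsym _ μ
      have e1 := hinv k μ α'
      have e2 := hinv l μ γ'
      have e3 := hinv (δ γ') μ α'
      simp only [dblBracket, coad, LinearMap.sub_apply, LinearMap.add_apply,
        LinearMap.neg_apply, LinearMap.comp_apply, LieAlgebra.ad_apply] at hμ ⊢
      rw [map_sub, hμ]
      have hskew : (⁅l, δ γ'⁆ : K) = -⁅δ γ', l⁆ := (lie_skew _ _).symm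
      simp only [lie_add, add_lie, map_add, map_sub, hskew, map_neg] at e2 ⊢
      linarith
    simp only [Prod.mk.injEq]
    refine ⟨Prod.ext ?_ rfl,
      Prod.ext rfl (by show ⁅k + δ γ', l + δ α'⁆ = _; rw [hB]; simp), rfl⟩
    ext x
    have e1 := hinv x γ α'
    have h1 : (⁅x, δ α'⁆ : K) = -⁅δ α', x⁆ := (lie_skew _ _).symm
    have h2 : (⁅x, δ γ⁆ : K) = -⁅δ γ, x⁆ := (lie_skew _ _).symm
    rw [h1, h2, map_neg, map_neg] at e1
    simp only [dblBracket, coad, LinearMap.sub_apply, LinearMap.add_apply,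
      LinearMap.neg_apply, LinearMap.comp_apply, LieAlgebra.ad_apply,
      Prod.fst_add, Prod.snd_add, map_add, add_lie, lie_add]
    linarith
end

section
/- Let K be a finite-dimensional real Lie algebra and ∂ : K* → K a linear map that is symmetric and K-invariant. Suppose D ⊆ K is a Lie subalgebra such that its annihilator D⁰ := {γ ∈ K* : γ|_D = 0} satisfies γ'(∂γ) = 0 for all γ, γ' ∈ D⁰. Then L := D⁰ × D ⊆ K* × K satisfies: (i) L is closed under the double bracket ⁅(γ,k),(γ',k')⁆ := (k·γ' − k'·γ + (∂γ)·γ', [k,k']); (ii) k + ∂γ ∈ D for all (γ,k) ∈ L; and (iii) L is Lagrangian for the pairing ⟨(γ,k),(γ',k')⟩ := (1/2)(γ(k') + γ'(k) + γ(∂γ')), i.e., L = L^⊥ := {e ∈ K* × K : ⟨e, e'⟩ = 0 for all e' ∈ L}. -/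
open Module

lemma mem_of_ann {K : Type*} [LieRing K] [LieAlgebra ℝ K] [FiniteDimensional ℝ K]
    (D : LieSubalgebra ℝ K) (x : K)
    (h : ∀ γ : Dual ℝ K, (∀ d ∈ D, γ d = 0) → γ x = 0) : x ∈ D := by
  have hD : (D.toSubmodule : Submodule ℝ K).dualAnnihilator.dualCoannihilator
      = D.toSubmodule := Subspace.dualAnnihilator_dualCoannihilator_eq
  have hx : x ∈ (D.toSubmodule : Submodule ℝ K).dualAnnihilator.dualCoannihilator := by
    rw [Submodule.mem_dualCoannihilator]
    intro γ hγ
    exact h γ (fun d hd => (Submodule.mem_dualAnnihilator γ).mp hγ d hd)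
  rw [hD] at hx
  exact hx

theorem stmt9 {K : Type*} [LieRing K] [LieAlgebra ℝ K] [FiniteDimensional ℝ K]
    (δ : Dual ℝ K →ₗ[ℝ] K)
    (hsym : ∀ γ γ' : Dual ℝ K, γ' (δ γ) = γ (δ γ'))
    (hinv : ∀ (k : K) (γ γ' : Dual ℝ K), γ ⁅k, δ γ'⁆ + γ' ⁅k, δ γ⁆ = 0)
    (D : LieSubalgebra ℝ K)
    (hiso : ∀ γ ∈ {γ : Dual ℝ K | ∀ d ∈ D, γ d = 0},
            ∀ γ' ∈ {γ : Dual ℝ K | ∀ d ∈ D, γ d = 0}, γ' (δ γ) = 0) :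
    -- L := D⁰ × D
    let L : Set (Dual ℝ K × K) :=
      {e | (∀ d ∈ D, e.1 d = 0) ∧ e.2 ∈ D}
    -- (i) L is closed under the double bracket
    (∀ e ∈ L, ∀ f ∈ L, dblBracket δ e f ∈ L) ∧
    -- (ii) L is closed under the groupoid target t(γ,k) = k + δγ
    (∀ e ∈ L, e.2 + δ e.1 ∈ D) ∧
    -- (iii) L is Lagrangian for the pairing
    (L = {e | ∀ f ∈ L, dblPairing δ e f = 0}) := by
  intro L
  have hδD : ∀ γ : Dual ℝ K, (∀ d ∈ D, γ d = 0) → δ γ ∈ D := by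
    intro γ hγ
    exact mem_of_ann D (δ γ) (fun γ' hγ' => hiso γ hγ γ' hγ')
  refine ⟨?_, ?_, ?_⟩
  · rintro e ⟨he1, he2⟩ f ⟨hf1, hf2⟩
    constructor
    · intro d hd
      simp only [dblBracket, coad, LinearMap.add_apply, LinearMap.sub_apply,
        LinearMap.neg_apply, LinearMap.comp_apply, LieAlgebra.ad_apply]
      rw [hf1 _ (D.lie_mem he2 hd), he1 _ (D.lie_mem hf2 hd),
        hf1 _ (D.lie_mem (hδD e.1 he1) hd)]
      ring
    · exact D.lie_mem he2 hf2
  · rintro e ⟨he1, he2⟩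
    exact D.add_mem he2 (hδD e.1 he1)
  · ext e
    constructor
    · rintro ⟨he1, he2⟩ f ⟨hf1, hf2⟩
      simp only [dblPairing]
      rw [he1 _ hf2, hf1 _ he2, he1 _ (hδD f.1 hf1)]
      ring
    · intro he
      have he1 : ∀ d ∈ D, e.1 d = 0 := by
        intro d hd
        have h0 := he (0, d) ⟨fun _ _ => rfl, hd⟩
        simp only [dblPairing, LinearMap.zero_apply, map_zero] at h0
        linarith
      refine ⟨he1, mem_of_ann D e.2 (fun γ' hγ' => ?_)⟩
      have h0 := he (γ', 0) ⟨hγ', D.zero_mem⟩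
      simp only [dblPairing, map_zero] at h0
      have h2 : e.1 (δ γ') = γ' (δ e.1) := (hsym e.1 γ').symm
      have h3 : γ' (δ e.1) = 0 := hγ' _ (hδD e.1 he1)
      linarith
end

section
/- Let K be a finite-dimensional real Lie algebra and ∂ : K* → K a linear map that is symmetric and K-invariant. Let L ⊆ K* × K be a linear subspace such that: (i) L = L^⊥ with respect to the pairing ⟨(γ,k),(γ',k')⟩ := (1/2)(γ(k') + γ'(k) + γ(∂γ')); (ii) L is closed under the double bracket ⁅(γ,k),(γ',k')⁆ := (k·γ' − k'·γ + (∂γ)·γ', [k,k']); and (iii) (γ,k) ∈ L implies (0,k) ∈ L. Set D := {k ∈ K : (0,k) ∈ L}. Then D is a Lie subalgebra of K, its annihilator D⁰ := {γ ∈ K* : γ|_D = 0} satisfies γ'(∂γ) = 0 for all γ, γ' ∈ D⁰, and L = D⁰ × D. -/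
open Module

theorem stmt10 {K : Type*} [LieRing K] [LieAlgebra ℝ K] [FiniteDimensional ℝ K]
    (δ : Dual ℝ K →ₗ[ℝ] K)
    (hsym : ∀ γ γ' : Dual ℝ K, γ' (δ γ) = γ (δ γ'))
    (hinv : ∀ (k : K) (γ γ' : Dual ℝ K), γ ⁅k, δ γ'⁆ + γ' ⁅k, δ γ⁆ = 0)
    (L : Submodule ℝ (Dual ℝ K × K))
    -- (i) L is Lagrangian
    (hLag : (L : Set (Dual ℝ K × K)) = {e | ∀ f ∈ L, dblPairing δ e f = 0})
    -- (ii) L is closed under the double bracket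
    (hbr : ∀ e ∈ L, ∀ f ∈ L, dblBracket δ e f ∈ L)
    -- (iii) L contains the units over its base
    (hunit : ∀ e ∈ L, ((0 : Dual ℝ K), e.2) ∈ L) :
    -- D := s(L)
    let D : Set K := {k : K | ((0 : Dual ℝ K), k) ∈ L}
    -- D is a Lie subalgebra of K
    (∀ k ∈ D, ∀ k' ∈ D, ⁅k, k'⁆ ∈ D) ∧
    -- D⁰ is isotropic for ⌊γ,γ'⌋ = γ'(δγ)
    (∀ γ ∈ {γ : Dual ℝ K | ∀ d ∈ D, γ d = 0},
     ∀ γ' ∈ {γ : Dual ℝ K | ∀ d ∈ D, γ d = 0}, γ' (δ γ) = 0) ∧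
    -- L = D⁰ × D
    ((L : Set (Dual ℝ K × K)) = {e | (∀ d ∈ D, e.1 d = 0) ∧ e.2 ∈ D}) := by
  intro D
  have hmemL : ∀ e, e ∈ L ↔ ∀ f ∈ L, dblPairing δ e f = 0 := by
    intro e
    constructor
    · intro he
      have : e ∈ (L : Set (Dual ℝ K × K)) := he
      rw [hLag] at this
      exact this
    · intro he
      have : e ∈ ({e | ∀ f ∈ L, dblPairing δ e f = 0} : Set (Dual ℝ K × K)) := he
      rw [← hLag] at this
      exact this
  -- every element of L has its first component in A := {γ | (γ,0) ∈ L}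
  have hD1 : ∀ e ∈ L, (e.1, (0 : K)) ∈ L := by
    intro e he
    have h2 := hunit e he
    have h3 := L.sub_mem he h2
    have : e - ((0 : Dual ℝ K), e.2) = (e.1, (0 : K)) := by
      ext <;> simp
    rwa [this] at h3
  -- A is isotropic for ⌊γ,γ'⌋
  have hiso : ∀ γ γ' : Dual ℝ K, (γ, (0 : K)) ∈ L → (γ', (0 : K)) ∈ L →
      γ (δ γ') = 0 := by
    intro γ γ' h h'
    have := (hmemL _).mp h _ h'
    simp only [dblPairing, map_zero, zero_add, add_zero] at this
    linarith
  -- δ maps A into D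
  have hδD : ∀ γ : Dual ℝ K, (γ, (0 : K)) ∈ L → ((0 : Dual ℝ K), δ γ) ∈ L := by
    intro γ h
    apply (hmemL _).mpr
    intro f hf
    have h1 := hiso f.1 γ (hD1 f hf) h
    simp only [dblPairing, LinearMap.zero_apply, zero_add, add_zero, h1]
    ring
  -- D⁰ ⊆ A
  have hann : ∀ γ : Dual ℝ K, (∀ d ∈ D, γ d = 0) → (γ, (0 : K)) ∈ L := by
    intro γ hγ
    apply (hmemL _).mpr
    intro f hf
    have h1 : γ f.2 = 0 := hγ f.2 (hunit f hf)
    have h2 : γ (δ f.1) = 0 := hγ (δ f.1) (hδD f.1 (hD1 f hf))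
    simp only [dblPairing, h1, h2, map_zero, add_zero, zero_add, mul_zero]
  -- A ⊆ D⁰
  have hAann : ∀ γ : Dual ℝ K, (γ, (0 : K)) ∈ L → ∀ d ∈ D, γ d = 0 := by
    intro γ h d hd
    have := (hmemL _).mp h ((0 : Dual ℝ K), d) hd
    simp only [dblPairing, LinearMap.zero_apply, map_zero, add_zero, zero_add] at this
    linarith
  refine ⟨?_, ?_, ?_⟩
  · -- D is a Lie subalgebra
    intro k hk k' hk'
    have := hbr ((0 : Dual ℝ K), k) hk ((0 : Dual ℝ K), k') hk'
    simpa [dblBracket, coad, D] using this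
  · -- isotropy of D⁰
    intro γ hγ γ' hγ'
    exact hiso γ' γ (hann γ' hγ') (hann γ hγ)
  · -- L = D⁰ × D
    ext e
    constructor
    · intro he
      exact ⟨hAann e.1 (hD1 e he), hunit e he⟩
    · rintro ⟨h1, h2⟩
      have ha : (e.1, (0 : K)) ∈ L := hann e.1 h1
      have hb : ((0 : Dual ℝ K), e.2) ∈ L := h2
      have := L.add_mem ha hb
      have heq : (e.1, (0 : K)) + ((0 : Dual ℝ K), e.2) = e := by
        ext <;> simp
      rwa [heq] at this
end
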